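/- Every IC pricing rule is a component-wise Groves mechanism: if p is an IC pricing rule, then for every agent i and every v_{-i} ∈ Θ_{-i} there exist reals h_i^C(v_{-i}), one for each connected component C of Θ_i(v_{-i}), such that p_i(v_i, v_{-i}) = h_i^{C(v_i, v_{-i})}(v_{-i}) − Σ_{j≠i} v_j(α^eff(v_i, v_{-i})) for every v_i ∈ Θ_i(v_{-i}), where C(v_i, v_{-i}) is the connected component of Θ_i(v_{-i}) containing v_i. -/

import Mathlib

variable {n : ℕ} {Γ : Type*}

/-- The welfare of a type profile: the maximum total value over allocations. -/
noncomputable def welfare [Fintype Γ] [Nonempty Γ] (v : Fin n → Γ → ℝ) : ℝ :=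
  Finset.univ.sup' Finset.univ_nonempty fun γ => ∑ j, v j γ

/-- The typeSlice `Θ_i(v_{-i})`: types for agent `i` consistent with the others' types in `v`. -/
def typeSlice (Θ : Set (Fin n → Γ → ℝ)) (i : Fin n) (v : Fin n → Γ → ℝ) : Set (Γ → ℝ) :=
  {vi | Function.update v i vi ∈ Θ}

/-- `f` depends only on the coordinates other than `i` (i.e. is a function of `v_{-i}`). -/
def IndepOf (i : Fin n) (f : (Fin n → Γ → ℝ) → ℝ) : Prop :=
  ∀ v v' : Fin n → Γ → ℝ, (∀ j, j ≠ i → v j = v' j) → f v = f v'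

/-- Incentive compatibility of a pricing rule `p` w.r.t. allocation function `f`. -/
def IC (Θ : Set (Fin n → Γ → ℝ)) (f : (Fin n → Γ → ℝ) → Γ)
    (p : Fin n → (Fin n → Γ → ℝ) → ℝ) : Prop :=
  ∀ (i : Fin n) (v v' : Fin n → Γ → ℝ), v ∈ Θ → v' ∈ Θ → (∀ j, j ≠ i → v j = v' j) →
    v i (f v) - p i v ≥ v i (f v') - p i v'

/-- Individual rationality of a pricing rule `p` w.r.t. allocation function `f`. -/
def IR (Θ : Set (Fin n → Γ → ℝ)) (f : (Fin n → Γ → ℝ) → Γ)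
    (p : Fin n → (Fin n → Γ → ℝ) → ℝ) : Prop :=
  ∀ (i : Fin n), ∀ v ∈ Θ, v i (f v) - p i v ≥ 0

/-- `Θ_i^α(v_{-i})`: types of agent `i` leading to efficient allocation `α`. -/
def allocSlice (Θ : Set (Fin n → Γ → ℝ)) (αeff : (Fin n → Γ → ℝ) → Γ)
    (i : Fin n) (v : Fin n → Γ → ℝ) (α : Γ) : Set (Γ → ℝ) :=
  {vi | vi ∈ typeSlice Θ i v ∧ αeff (Function.update v i vi) = α}

/-- The weakest-type pricing rule. -/
noncomputable def pWT [Fintype Γ] [Nonempty Γ] (Θ : Set (Fin n → Γ → ℝ))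
    (αeff : (Fin n → Γ → ℝ) → Γ) (i : Fin n) (v : Fin n → Γ → ℝ) : ℝ :=
  sInf ((fun vi => welfare (Function.update v i vi)) '' typeSlice Θ i v)
    - ∑ j ∈ Finset.univ.erase i, v j (αeff v)

/-- The constraints Constr-Γ at `v_{-i}` for a family `(h^α)_{α ∈ Γ}`. -/
def ConstrGamma [Fintype Γ] [Nonempty Γ] (Θ : Set (Fin n → Γ → ℝ))
    (αeff : (Fin n → Γ → ℝ) → Γ) (i : Fin n) (v : Fin n → Γ → ℝ) (h : Γ → ℝ) : Prop :=
  (∀ α : Γ, ∀ vt ∈ allocSlice Θ αeff i v α, h α ≤ welfare (Function.update v i vt)) ∧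
  (∀ α β : Γ, ∀ vt ∈ allocSlice Θ αeff i v α,
    h α - h β ≤ welfare (Function.update v i vt)
      - (vt β + ∑ j ∈ Finset.univ.erase i, v j β))

/-- The constraints Constr-C at `v_{-i}` for a family indexed by connected components. -/
def ConstrC [Fintype Γ] [Nonempty Γ] (Θ : Set (Fin n → Γ → ℝ))
    (αeff : (Fin n → Γ → ℝ) → Γ) (i : Fin n) (v : Fin n → Γ → ℝ)
    (h : Set (Γ → ℝ) → ℝ) : Prop :=
  (∀ vt ∈ typeSlice Θ i v,
    h (connectedComponentIn (typeSlice Θ i v) vt) ≤ welfare (Function.update v i vt)) ∧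
  (∀ vC ∈ typeSlice Θ i v, ∀ vD ∈ typeSlice Θ i v,
    h (connectedComponentIn (typeSlice Θ i v) vC) - h (connectedComponentIn (typeSlice Θ i v) vD)
      ≤ welfare (Function.update v i vC)
        - (vC (αeff (Function.update v i vD))
            + ∑ j ∈ Finset.univ.erase i, v j (αeff (Function.update v i vD))))

/-- Every IC pricing rule is a component-wise Groves mechanism. -/
theorem IC_is_componentwise_groves [Fintype Γ] [Nonempty Γ]
    (Θ : Set (Fin n → Γ → ℝ))
    (αeff : (Fin n → Γ → ℝ) → Γ)
    (heff : ∀ v : Fin n → Γ → ℝ, ∑ j, v j (αeff v) = welfare v)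
    (p : Fin n → (Fin n → Γ → ℝ) → ℝ)
    (hp : IC Θ αeff p) :
    ∀ (i : Fin n) (v : Fin n → Γ → ℝ), (typeSlice Θ i v).Nonempty →
      ∃ h : Set (Γ → ℝ) → ℝ,
        ∀ vi ∈ typeSlice Θ i v,
          p i (Function.update v i vi)
            = h (connectedComponentIn (typeSlice Θ i v) vi)
              - ∑ j ∈ Finset.univ.erase i, v j (αeff (Function.update v i vi)) := by
    classical
  intro i v _hne
  set S := typeSlice Θ i v with hS
  set g : (Γ → ℝ) → ℝ := fun x =>
    p i (Function.update v i x)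
      + ∑ j ∈ Finset.univ.erase i, v j (αeff (Function.update v i x)) with hg
  -- sum decomposition
  have hsum : ∀ (x : Γ → ℝ) (γ : Γ),
      ∑ j, Function.update v i x j γ = x γ + ∑ j ∈ Finset.univ.erase i, v j γ := by
    intro x γ
    rw [← Finset.add_sum_erase _ _ (Finset.mem_univ i)]
    simp only [Function.update_self]
    congr 1
    exact Finset.sum_congr rfl fun j hj => by
      rw [Function.update_of_ne (Finset.ne_of_mem_erase hj)]
  have hwle : ∀ (x : Γ → ℝ) (γ : Γ),
      ∑ j, Function.update v i x j γ ≤ welfare (Function.update v i x) := by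
    intro x γ
    exact Finset.le_sup' (fun γ => ∑ j, Function.update v i x j γ) (Finset.mem_univ γ)
  have hupd : ∀ x x' : Γ → ℝ, ∀ j, j ≠ i →
      Function.update v i x j = Function.update v i x' j := by
    intro x x' j hj
    rw [Function.update_of_ne hj, Function.update_of_ne hj]
  -- key one-sided bound
  have bound : ∀ x ∈ S, ∀ x' ∈ S,
      g x' - g x ≤ (x' (αeff (Function.update v i x')) - x (αeff (Function.update v i x')))
        - (x' (αeff (Function.update v i x)) - x (αeff (Function.update v i x))) := by
    intro x hx x' hx'
    have ic := hp i (Function.update v i x') (Function.update v i x) hx' hx (hupd x' x)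
    simp only [Function.update_self] at ic
    have h1 := hwle x (αeff (Function.update v i x'))
    rw [hsum] at h1
    have h2 := heff (Function.update v i x)
    rw [hsum] at h2
    simp only [hg]
    linarith
  have same_alloc : ∀ x ∈ S, ∀ x' ∈ S,
      αeff (Function.update v i x) = αeff (Function.update v i x') → g x = g x' := by
    intro x hx x' hx' hα
    have b1 := bound x hx x' hx'
    have b2 := bound x' hx' x hx
    rw [hα] at b1 b2
    linarith
  have habs : ∀ x x' : Γ → ℝ, ∀ γ : Γ, |x' γ - x γ| ≤ dist x' x := by
    intro x x' γ
    rw [← Real.dist_eq]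
    exact dist_le_pi_dist x' x γ
  have gcont : ContinuousOn g S := by
    rw [Metric.continuousOn_iff]
    intro x hx ε hε
    refine ⟨ε / 2, by positivity, fun y hy hyx => ?_⟩
    have b1 := bound x hx y hy
    have b2 := bound y hy x hx
    have e1 := habs x y (αeff (Function.update v i y))
    have e2 := habs x y (αeff (Function.update v i x))
    rw [Real.dist_eq]
    rw [abs_lt]
    rw [abs_le] at e1 e2
    constructor <;> linarith
  -- finiteness of image
  have gfin : (g '' S).Finite := by
    set F : Γ → ℝ := fun γ =>
      if hγ : ∃ y ∈ S, αeff (Function.update v i y) = γ then g hγ.choose else 0 with hF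
    refine Set.Finite.subset (Set.finite_range F) ?_
    rintro _ ⟨x, hx, rfl⟩
    have hex : ∃ y ∈ S, αeff (Function.update v i y) = αeff (Function.update v i x) :=
      ⟨x, hx, rfl⟩
    refine ⟨αeff (Function.update v i x), ?_⟩
    simp only [hF, dif_pos hex]
    exact same_alloc _ hex.choose_spec.1 x hx hex.choose_spec.2
  -- constancy on connected components
  have const : ∀ vi ∈ S, ∀ x ∈ connectedComponentIn S vi, g x = g vi := by
    intro vi hvi x hx
    by_contra hne'
    have hsub : connectedComponentIn S vi ⊆ S := connectedComponentIn_subset S vi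
    have himg : IsPreconnected (g '' connectedComponentIn S vi) :=
      (isPreconnected_connectedComponentIn).image g (gcont.mono hsub)
    have hmemx : g x ∈ g '' connectedComponentIn S vi := ⟨x, hx, rfl⟩
    have hmemv : g vi ∈ g '' connectedComponentIn S vi :=
      ⟨vi, mem_connectedComponentIn hvi, rfl⟩
    have hfin : (g '' connectedComponentIn S vi).Finite :=
      gfin.subset (Set.image_mono (f := g) hsub)
    have hoc := himg.ordConnected
    rcases lt_or_gt_of_ne hne' with h | h
    · exact Set.Icc_infinite h (hfin.subset (hoc.out hmemx hmemv))
    · exact Set.Icc_infinite h (hfin.subset (hoc.out hmemv hmemx))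
  refine ⟨fun C => if hC : (C ∩ S).Nonempty then g hC.choose else 0, ?_⟩
  intro vi hvi
  have hCne : (connectedComponentIn S vi ∩ S).Nonempty :=
    ⟨vi, mem_connectedComponentIn hvi, hvi⟩
  simp only [dif_pos hCne, hg]
  have := const vi hvi _ hCne.choose_spec.1
  simp only [hg] at this
  linarith
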